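/- (Monotonicity under inclusion.) Let α, β, μ, ν be partitions with n parts such that α ⊆ μ and β ⊆ ν (componentwise inequality of parts). Then λ(α,β) ⊆ λ(μ,ν) and ρ(α,β) ⊆ ρ(μ,ν), i.e., λ(α,β)_k ≤ λ(μ,ν)_k and ρ(α,β)_k ≤ ρ(μ,ν)_k for every 1 ≤ k ≤ n. -/

import Mathlib

/-- A partition with `n` (possibly zero) parts: a weakly decreasing sequence of
nonnegative integers, recorded 0-indexed, vanishing from index `n` on. -/
def IsPartitionN (n : ℕ) (μ : ℕ → ℕ) : Prop :=
  Antitone μ ∧ ∀ i, n ≤ i → μ i = 0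

/-- A partition (finitely many nonzero parts), 0-indexed. -/
def IsPartition (μ : ℕ → ℕ) : Prop :=
  Antitone μ ∧ ∃ N, ∀ i, N ≤ i → μ i = 0

/-- `λ(μ,ν)_k = μ_k − k + #{j : 1 ≤ j ≤ n, ν_j − j ≥ μ_k − k}`, 0-indexed,
so the (k+1)-st part of `λ(μ,ν)`, as an integer. -/
def lamStar (n : ℕ) (μ ν : ℕ → ℕ) (k : ℕ) : ℤ :=
  (μ k : ℤ) - (k + 1) +
    ((Finset.range n).filter (fun j => (μ k : ℤ) - (k + 1) ≤ (ν j : ℤ) - (j + 1))).card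

/-- `ρ(μ,ν)_j = ν_j − j + 1 + #{k : 1 ≤ k ≤ n, μ_k − k > ν_j − j}`, 0-indexed. -/
def rhoStar (n : ℕ) (μ ν : ℕ → ℕ) (j : ℕ) : ℤ :=
  (ν j : ℤ) - (j + 1) + 1 +
    ((Finset.range n).filter (fun k => (ν j : ℤ) - (j + 1) < (μ k : ℤ) - (k + 1))).card

/-- `λ(μ,ν)` as a sequence of natural numbers. -/
def lamStarN (n : ℕ) (μ ν : ℕ → ℕ) (k : ℕ) : ℕ := (lamStar n μ ν k).toNat

/-- `ρ(μ,ν)` as a sequence of natural numbers. -/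
def rhoStarN (n : ℕ) (μ ν : ℕ → ℕ) (k : ℕ) : ℕ := (rhoStar n μ ν k).toNat

/-- The conjugate partition: `μ′_i = #{k : μ_k ≥ i}` (1-indexed), recorded 0-indexed. -/
noncomputable def conjP (μ : ℕ → ℕ) (i : ℕ) : ℕ := {k : ℕ | i + 1 ≤ μ k}.ncard

/-- Remove a full column of height `k`: subtract 1 from the first `k` parts. -/
def removeCol (k : ℕ) (σ : ℕ → ℕ) : ℕ → ℕ := fun j => if j < k then σ j - 1 else σ j

/-- An LR filling of the skew shape `θ/ν` of type `μ` (all 0-indexed; cell `(i,j)`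
is row `i+1`, column `j+1`; the entry `0` marks cells outside the skew shape).
Rows weakly increase, columns strictly increase, the entry `m+1` occurs `μ m`
times, and the reverse reading word (rows top to bottom, each row right to left)
is a lattice permutation. It is required that `ν ⊆ θ`. -/
def IsLRFilling (θ ν μ : ℕ → ℕ) (T : ℕ → ℕ → ℕ) : Prop :=
  (∀ i, ν i ≤ θ i) ∧
  (∀ i j, ν i ≤ j → j < θ i → 1 ≤ T i j) ∧
  (∀ i j, ¬(ν i ≤ j ∧ j < θ i) → T i j = 0) ∧
  (∀ i j j', ν i ≤ j → j ≤ j' → j' < θ i → T i j ≤ T i j') ∧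
  (∀ i i' j, i < i' → ν i ≤ j → j < θ i → ν i' ≤ j → j < θ i' → T i j < T i' j) ∧
  (∀ m : ℕ, {p : ℕ × ℕ | T p.1 p.2 = m + 1}.ncard = μ m) ∧
  (∀ m i j : ℕ,
    {p : ℕ × ℕ | T p.1 p.2 = m + 2 ∧ (p.1 < i ∨ (p.1 = i ∧ j ≤ p.2))}.ncard ≤
    {p : ℕ × ℕ | T p.1 p.2 = m + 1 ∧ (p.1 < i ∨ (p.1 = i ∧ j ≤ p.2))}.ncard)

/-- The Littlewood–Richardson coefficient `c_{μν}^θ`: the number of LR fillings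
of `θ/ν` of type `μ` (equal to `0` when `ν ⊄ θ`). -/
noncomputable def lrCoeff (μ ν θ : ℕ → ℕ) : ℕ := Nat.card {T : ℕ → ℕ → ℕ // IsLRFilling θ ν μ T}

lemma count_between (n : ℕ) (w : ℕ → ℤ) (hw : Function.Injective w) {x y : ℤ} (hxy : x ≤ y) :
    (((Finset.range n).filter (fun j => x ≤ w j ∧ w j < y)).card : ℤ) ≤ y - x := by
  have h := Finset.card_le_card_of_injOn w
    (s := (Finset.range n).filter (fun j => x ≤ w j ∧ w j < y)) (t := Finset.Ico x y)
    (fun a ha => by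
      simp only [Finset.mem_coe, Finset.mem_filter] at ha
      simp [Finset.mem_Ico, ha.2.1, ha.2.2]) hw.injOn
  have hc : (Finset.Ico x y).card = (y - x).toNat := Int.card_Ico x y
  omega

lemma count_between' (n : ℕ) (w : ℕ → ℤ) (hw : Function.Injective w) {x y : ℤ} (hxy : x ≤ y) :
    (((Finset.range n).filter (fun j => x < w j ∧ w j ≤ y)).card : ℤ) ≤ y - x := by
  have h := Finset.card_le_card_of_injOn w
    (s := (Finset.range n).filter (fun j => x < w j ∧ w j ≤ y)) (t := Finset.Ioc x y)
    (fun a ha => by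
      simp only [Finset.mem_coe, Finset.mem_filter] at ha
      simp [Finset.mem_Ioc, ha.2.1, ha.2.2]) hw.injOn
  have hc : (Finset.Ioc x y).card = (y - x).toNat := Int.card_Ioc x y
  omega

lemma key_le (n : ℕ) (w : ℕ → ℤ) (hw : Function.Injective w) {x y : ℤ} (hxy : x ≤ y) :
    x + (((Finset.range n).filter (fun j => x ≤ w j)).card : ℤ) ≤
    y + (((Finset.range n).filter (fun j => y ≤ w j)).card : ℤ) := by
  have hsub : (Finset.range n).filter (fun j => x ≤ w j) ⊆
      ((Finset.range n).filter (fun j => y ≤ w j)) ∪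
      ((Finset.range n).filter (fun j => x ≤ w j ∧ w j < y)) := by
    intro a ha
    simp only [Finset.mem_filter, Finset.mem_union] at *
    rcases le_or_gt y (w a) with h | h
    · exact Or.inl ⟨ha.1, h⟩
    · exact Or.inr ⟨ha.1, ha.2, h⟩
  have h1 := Finset.card_le_card hsub
  have h2 := Finset.card_union_le ((Finset.range n).filter (fun j => y ≤ w j))
    ((Finset.range n).filter (fun j => x ≤ w j ∧ w j < y))
  have h3 := count_between n w hw hxy
  omega

lemma key_lt (n : ℕ) (w : ℕ → ℤ) (hw : Function.Injective w) {x y : ℤ} (hxy : x ≤ y) :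
    x + (((Finset.range n).filter (fun j => x < w j)).card : ℤ) ≤
    y + (((Finset.range n).filter (fun j => y < w j)).card : ℤ) := by
  have hsub : (Finset.range n).filter (fun j => x < w j) ⊆
      ((Finset.range n).filter (fun j => y < w j)) ∪
      ((Finset.range n).filter (fun j => x < w j ∧ w j ≤ y)) := by
    intro a ha
    simp only [Finset.mem_filter, Finset.mem_union] at *
    rcases le_or_gt (w a) y with h | h
    · exact Or.inr ⟨ha.1, ha.2, h⟩
    · exact Or.inl ⟨ha.1, h⟩
  have h1 := Finset.card_le_card hsub
  have h2 := Finset.card_union_le ((Finset.range n).filter (fun j => y < w j))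
    ((Finset.range n).filter (fun j => x < w j ∧ w j ≤ y))
  have h3 := count_between' n w hw hxy
  omega

lemma content_injective {ν : ℕ → ℕ} (hν : Antitone ν) :
    Function.Injective (fun j => (ν j : ℤ) - (j + 1)) := by
  have : StrictAnti (fun j => (ν j : ℤ) - (j + 1)) := by
    intro a b hab
    have := hν hab.le
    simp only
    omega
  exact this.injective

/-- Monotonicity of the `*`-operation under componentwise inclusion:
`(α,β) ⊆ (μ,ν)` implies `λ(α,β) ⊆ λ(μ,ν)` and `ρ(α,β) ⊆ ρ(μ,ν)`. -/
theorem star_monotone (n : ℕ) (α β μ ν : ℕ → ℕ)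
    (hα : IsPartitionN n α) (hβ : IsPartitionN n β)
    (hμ : IsPartitionN n μ) (hν : IsPartitionN n ν)
    (hαμ : ∀ k, α k ≤ μ k) (hβν : ∀ k, β k ≤ ν k) :
    (∀ k, k < n → lamStar n α β k ≤ lamStar n μ ν k) ∧
    (∀ k, k < n → rhoStar n α β k ≤ rhoStar n μ ν k) := by
  constructor
  · intro k _
    have step1 : lamStar n α β k ≤ lamStar n α ν k := by
      unfold lamStar
      have : ((Finset.range n).filter
            (fun j => (α k : ℤ) - (k + 1) ≤ (β j : ℤ) - (j + 1))).card ≤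
          ((Finset.range n).filter
            (fun j => (α k : ℤ) - (k + 1) ≤ (ν j : ℤ) - (j + 1))).card := by
        apply Finset.card_le_card
        intro a ha
        simp only [Finset.mem_filter] at *
        have := hβν a
        refine ⟨ha.1, by omega⟩
      omega
    have step2 : lamStar n α ν k ≤ lamStar n μ ν k := by
      unfold lamStar
      have := key_le n (fun j => (ν j : ℤ) - (j + 1)) (content_injective hν.1)
        (x := (α k : ℤ) - (k + 1)) (y := (μ k : ℤ) - (k + 1)) (by have := hαμ k; omega)
      simpa using this
    exact step1.trans step2
  · intro j _
    have step1 : rhoStar n α β j ≤ rhoStar n μ β j := by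
      unfold rhoStar
      have : ((Finset.range n).filter
            (fun k => (β j : ℤ) - (j + 1) < (α k : ℤ) - (k + 1))).card ≤
          ((Finset.range n).filter
            (fun k => (β j : ℤ) - (j + 1) < (μ k : ℤ) - (k + 1))).card := by
        apply Finset.card_le_card
        intro a ha
        simp only [Finset.mem_filter] at *
        have := hαμ a
        refine ⟨ha.1, by omega⟩
      omega
    have step2 : rhoStar n μ β j ≤ rhoStar n μ ν j := by
      unfold rhoStar
      have h : (β j : ℤ) - (j + 1) + ((Finset.range n).filter
            (fun k => (β j : ℤ) - (j + 1) < (μ k : ℤ) - (k + 1))).card ≤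
          (ν j : ℤ) - (j + 1) + ((Finset.range n).filter
            (fun k => (ν j : ℤ) - (j + 1) < (μ k : ℤ) - (k + 1))).card := by
        simpa using key_lt n (fun k => (μ k : ℤ) - (k + 1)) (content_injective hμ.1)
          (x := (β j : ℤ) - (j + 1)) (y := (ν j : ℤ) - (j + 1)) (by have := hβν j; omega)
      omega
    exact step1.trans step2
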